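/- Let (Ω, μ) be a probability space, 𝒳 a measurable space, and let (Xᵢ)_{i≥1}, (Yᵢ)_{i≥1} : Ω → 𝒳 be sequences such that the pairs (Xᵢ, Yᵢ) are i.i.d., with X₁ distributed as P and Y₁ distributed as Q. Let f : 𝒳 → ℝ be measurable with |f(x)| ≤ 1 for all x, let τ ≥ 0 satisfy ∫ f dP − ∫ f dQ ≤ τ, let λ ∈ [0, 1/(2+τ)], and let α ∈ (0,1). Define K₀ = 1 and K_t = ∏_{i=1}^{t} (1 + λ·(f(Xᵢ) − f(Yᵢ) − τ)). Then K_t ≥ 0 for all t, and μ({ω : ∃ t ≥ 1 with K_t(ω) ≥ 1/α}) ≤ α. -/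

import Mathlib

open MeasureTheory ProbabilityTheory

/-- Ville-type Type I error control for the abstract wealth process of the sequential
DP test: if the pairs `(Xᵢ, Yᵢ)` are i.i.d. with `X` distributed as `P` and `Y` as `Q`,
`|f| ≤ 1`, `∫ f dP − ∫ f dQ ≤ τ`, and `λ ∈ [0, 1/(2+τ)]`, then the wealth process
`K_t = ∏_{i<t} (1 + λ(f(Xᵢ) − f(Yᵢ) − τ))` is nonnegative and exceeds `1/α` at some time
with probability at most `α`. -/
theorem abstract_test_type_I_error
    {Ω : Type*} [MeasurableSpace Ω] (μ : Measure Ω) [IsProbabilityMeasure μ]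
    {𝒳 : Type*} [MeasurableSpace 𝒳]
    (X Y : ℕ → Ω → 𝒳) (hX : ∀ i, Measurable (X i)) (hY : ∀ i, Measurable (Y i))
    (hindep : iIndepFun
      (fun i ω => (X i ω, Y i ω)) μ)
    (hident : ∀ i, IdentDistrib (fun ω => (X i ω, Y i ω))
      (fun ω => (X 0 ω, Y 0 ω)) μ μ)
    (P Q : Measure 𝒳)
    (hP : μ.map (X 0) = P) (hQ : μ.map (Y 0) = Q)
    (f : 𝒳 → ℝ) (hf : Measurable f) (hf1 : ∀ x, |f x| ≤ 1)
    (τ : ℝ) (hτ : 0 ≤ τ) (hnull : (∫ x, f x ∂P) - ∫ x, f x ∂Q ≤ τ)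
    (lam : ℝ) (hlam0 : 0 ≤ lam) (hlam1 : lam ≤ 1 / (2 + τ))
    (α : ℝ) (hα0 : 0 < α) (hα1 : α < 1)
    (K : ℕ → Ω → ℝ)
    (hK : ∀ t ω, K t ω =
      ∏ i ∈ Finset.range t, (1 + lam * (f (X i ω) - f (Y i ω) - τ))) :
    (∀ t ω, 0 ≤ K t ω) ∧
      μ {ω | ∃ t : ℕ, 1 ≤ t ∧ 1 / α ≤ K t ω} ≤ ENNReal.ofReal α := by
  classical
  -- abbreviations
  set Z : ℕ → Ω → 𝒳 × 𝒳 := fun i ω => (X i ω, Y i ω) with hZdef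
  have hZ : ∀ i, Measurable (Z i) := fun i => (hX i).prodMk (hY i)
  set g : 𝒳 × 𝒳 → ℝ := fun z => 1 + lam * (f z.1 - f z.2 - τ) with hgdef
  have hg : Measurable g := by
    apply Measurable.const_add
    exact (((hf.comp measurable_fst).sub (hf.comp measurable_snd)).sub
      measurable_const).const_mul lam
  have h2τ : (0:ℝ) < 2 + τ := by linarith
  have hlam2 : lam * (2 + τ) ≤ 1 := by
    calc lam * (2 + τ) ≤ (1 / (2 + τ)) * (2 + τ) :=
          mul_le_mul_of_nonneg_right hlam1 h2τ.le
      _ = 1 := by field_simp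
  have hg0 : ∀ z, 0 ≤ g z := by
    intro z
    have h1 := abs_le.mp (hf1 z.1)
    have h2 := abs_le.mp (hf1 z.2)
    have : -(2 + τ) ≤ f z.1 - f z.2 - τ := by linarith [h1.1, h2.2]
    have hge : lam * (f z.1 - f z.2 - τ) ≥ lam * (-(2 + τ)) :=
      mul_le_mul_of_nonneg_left this hlam0
    simp only [hgdef]
    nlinarith
  have hg2 : ∀ z, g z ≤ 2 := by
    intro z
    have h1 := abs_le.mp (hf1 z.1)
    have h2 := abs_le.mp (hf1 z.2)
    have hle : f z.1 - f z.2 - τ ≤ 2 := by linarith [h1.2, h2.1]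
    have : lam * (f z.1 - f z.2 - τ) ≤ lam * 2 := mul_le_mul_of_nonneg_left hle hlam0
    have hlamhalf : lam ≤ 1 / 2 := by
      calc lam ≤ 1 / (2 + τ) := hlam1
        _ ≤ 1 / 2 := by
            apply div_le_div_of_nonneg_left one_pos.le two_pos; linarith
    simp only [hgdef]
    nlinarith
  -- rewrite K as products of g ∘ Z
  have hK' : ∀ t, K t = fun ω => ∏ i ∈ Finset.range t, g (Z i ω) := by
    intro t; funext ω; rw [hK]
  -- nonnegativity
  have hKnn : ∀ t ω, 0 ≤ K t ω := by
    intro t ω; rw [hK' t]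
    exact Finset.prod_nonneg fun i _ => hg0 _
  refine ⟨hKnn, ?_⟩
  -- bound on K
  have hKbd : ∀ t ω, K t ω ≤ 2 ^ t := by
    intro t ω; rw [hK' t]
    calc (∏ i ∈ Finset.range t, g (Z i ω)) ≤ ∏ i ∈ Finset.range t, (2:ℝ) :=
          Finset.prod_le_prod (fun i _ => hg0 _) (fun i _ => hg2 _)
      _ = 2 ^ t := by simp
  -- measurability of K
  have hKmeas : ∀ t, Measurable (K t) := by
    intro t; rw [hK' t]
    exact Finset.measurable_prod _ fun i _ => hg.comp (hZ i)
  -- filtration generated by Z 0, ..., Z (t-1)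
  let ℱ : Filtration ℕ ‹MeasurableSpace Ω› :=
    { seq := fun t => ⨆ k ∈ Set.Iio t, MeasurableSpace.comap (Z k) inferInstance
      mono' := fun i j hij => by
        refine iSup₂_le fun k hk => ?_
        exact le_iSup₂ (f := fun k (_ : k ∈ Set.Iio j) =>
          MeasurableSpace.comap (Z k) inferInstance) k (lt_of_lt_of_le hk hij)
      le' := fun t => iSup₂_le fun k _ => (hZ k).comap_le }
  have hℱ : ∀ t, ℱ t = ⨆ k ∈ Set.Iio t, MeasurableSpace.comap (Z k) inferInstance :=
    fun t => rfl
  -- Z k is measurable wrt comap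
  have hZk_comap : ∀ k, Measurable[MeasurableSpace.comap (Z k) inferInstance] (Z k) :=
    fun k => measurable_iff_comap_le.mpr le_rfl
  -- adaptedness
  have hadp : StronglyAdapted ℱ K := by
    intro t
    rw [hK' t]
    apply Measurable.stronglyMeasurable
    apply Finset.measurable_prod
    intro i hi
    have h1 : Measurable[MeasurableSpace.comap (Z i) inferInstance]
        (fun ω => g (Z i ω)) := hg.comp (hZk_comap i)
    exact h1.mono (le_iSup₂ (f := fun k (_ : k ∈ Set.Iio t) =>
      MeasurableSpace.comap (Z k) inferInstance) i (Finset.mem_range.mp hi)) le_rfl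
  -- integrability
  have hKint : ∀ t, Integrable (K t) μ := by
    intro t
    refine ⟨(hKmeas t).aestronglyMeasurable, ?_⟩
    apply HasFiniteIntegral.of_bounded (C := 2 ^ t)
    refine Filter.Eventually.of_forall fun ω => ?_
    rw [Real.norm_eq_abs, abs_of_nonneg (hKnn t ω)]
    exact hKbd t ω
  have hgZint : ∀ t, Integrable (fun ω => g (Z t ω)) μ := by
    intro t
    refine ⟨(hg.comp (hZ t)).aestronglyMeasurable, ?_⟩
    apply HasFiniteIntegral.of_bounded (C := 2)
    refine Filter.Eventually.of_forall fun ω => ?_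
    rw [Real.norm_eq_abs, abs_of_nonneg (hg0 _)]
    exact hg2 _
  -- independence of Z t and ℱ t
  have hindep' : ∀ t, Indep (MeasurableSpace.comap (Z t) inferInstance) (ℱ t) μ := by
    intro t
    have h := indep_iSup_of_disjoint (fun k => (hZ k).comap_le) hindep
      (S := {t}) (T := Set.Iio t) (by simp [Set.disjoint_left])
    rw [hℱ t]
    simpa using h
  -- conditional expectation of g (Z t) given ℱ t is constant
  have hcond : ∀ t, μ[(fun ω => g (Z t ω)) | ℱ t] =ᵐ[μ]
      fun _ => ∫ ω, g (Z t ω) ∂μ := by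
    intro t
    exact condExp_indep_eq (hZ t).comap_le (ℱ.le t)
      (Measurable.stronglyMeasurable (hg.comp (hZk_comap t))) (hindep' t)
  -- the mean of g (Z t) is at most 1
  have hmean : ∀ t, (∫ ω, g (Z t ω) ∂μ) ≤ 1 := by
    intro t
    have hid : IdentDistrib (fun ω => g (Z t ω)) (fun ω => g (Z 0 ω)) μ μ :=
      (hident t).comp hg
    rw [hid.integral_eq]
    have hfX : Integrable (fun ω => f (X 0 ω)) μ := by
      refine ⟨(hf.comp (hX 0)).aestronglyMeasurable, ?_⟩
      apply HasFiniteIntegral.of_bounded (C := 1)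
      exact Filter.Eventually.of_forall fun ω => by
        rw [Real.norm_eq_abs]; exact hf1 _
    have hfY : Integrable (fun ω => f (Y 0 ω)) μ := by
      refine ⟨(hf.comp (hY 0)).aestronglyMeasurable, ?_⟩
      apply HasFiniteIntegral.of_bounded (C := 1)
      exact Filter.Eventually.of_forall fun ω => by
        rw [Real.norm_eq_abs]; exact hf1 _
    have hIP : (∫ ω, f (X 0 ω) ∂μ) = ∫ x, f x ∂P := by
      rw [← hP, integral_map (hX 0).aemeasurable hf.aestronglyMeasurable]
    have hIQ : (∫ ω, f (Y 0 ω) ∂μ) = ∫ x, f x ∂Q := by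
      rw [← hQ, integral_map (hY 0).aemeasurable hf.aestronglyMeasurable]
    have hval : (∫ ω, g (Z 0 ω) ∂μ)
        = 1 + lam * ((∫ x, f x ∂P) - (∫ x, f x ∂Q) - τ) := by
      have : (fun ω => g (Z 0 ω))
          = fun ω => 1 + lam * (f (X 0 ω) - f (Y 0 ω) - τ) := rfl
      have hint1 : Integrable (fun ω => f (X 0 ω) - f (Y 0 ω)) μ := hfX.sub hfY
      have hint1' : Integrable (fun ω => f (X 0 ω) - f (Y 0 ω) - τ) μ :=
        hint1.sub (integrable_const τ)
      have hint2 : Integrable (fun ω => lam * (f (X 0 ω) - f (Y 0 ω) - τ)) μ :=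
        hint1'.const_mul lam
      rw [this]
      rw [integral_add (integrable_const 1) hint2]
      rw [integral_const_mul, integral_sub hint1 (integrable_const τ),
        integral_sub hfX hfY]
      simp [hIP, hIQ]
    rw [hval]
    nlinarith [mul_le_mul_of_nonneg_left (by linarith : (∫ x, f x ∂P) - (∫ x, f x ∂Q) - τ ≤ 0) hlam0]
  -- supermartingale property
  have hsup : Supermartingale K ℱ μ := by
    refine supermartingale_nat hadp hKint fun t => ?_
    have hprod : K (t + 1) = K t * fun ω => g (Z t ω) := by
      funext ω
      rw [hK' (t + 1), hK' t]
      simp [Finset.prod_range_succ]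
    have hKmul : Integrable (K t * fun ω => g (Z t ω)) μ := by
      rw [← hprod]; exact hKint (t + 1)
    calc μ[K (t + 1) | ℱ t]
        =ᵐ[μ] K t * μ[(fun ω => g (Z t ω)) | ℱ t] := by
          rw [hprod]
          exact condExp_mul_of_stronglyMeasurable_left (hadp t) hKmul (hgZint t)
      _ =ᵐ[μ] fun ω => K t ω * ∫ ω', g (Z t ω') ∂μ := by
          filter_upwards [hcond t] with ω hω
          simp only [Pi.mul_apply, hω]
      _ ≤ᵐ[μ] K t := by
          refine Filter.Eventually.of_forall fun ω => ?_
          have := mul_le_mul_of_nonneg_left (hmean t) (hKnn t ω)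
          simpa using this
  -- Ville's inequality via optional stopping
  have hαinv : (1:ℝ) < 1 / α := one_lt_one_div hα0 hα1
  have hK0 : ∀ ω, K 0 ω = 1 := by intro ω; rw [hK]; simp
  -- the sets A n
  set A : ℕ → Set Ω := fun n => {ω | ∃ t ≤ n, 1 / α ≤ K t ω} with hAdef
  have hAmeas : ∀ n, MeasurableSet (A n) := by
    intro n
    have : A n = ⋃ t ∈ Set.Iic n, {ω | 1 / α ≤ K t ω} := by
      ext ω; simp [hAdef]
    rw [this]
    exact MeasurableSet.biUnion (Set.to_countable _)
      (fun t _ => measurableSet_le measurable_const (hKmeas t))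
  have hAmono : Monotone A := by
    intro m n hmn ω ⟨t, ht, hle⟩
    exact ⟨t, ht.trans hmn, hle⟩
  -- union identification
  have hSU : {ω | ∃ t : ℕ, 1 ≤ t ∧ 1 / α ≤ K t ω} = ⋃ n, A n := by
    ext ω
    simp only [Set.mem_setOf_eq, Set.mem_iUnion, hAdef]
    constructor
    · rintro ⟨t, _, hle⟩; exact ⟨t, t, le_rfl, hle⟩
    · rintro ⟨n, t, _, hle⟩
      refine ⟨t, ?_, hle⟩
      by_contra h
      push_neg at h
      interval_cases t
      rw [hK0 ω] at hle
      linarith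
  -- the per-n bound
  have hbound : ∀ n, μ (A n) ≤ ENNReal.ofReal α := by
    intro n
    set σ : Ω → WithTop ℕ := fun ω => (hittingBtwn K (Set.Ici (1 / α)) 0 n ω : ℕ) with hσdef
    have hσ : IsStoppingTime ℱ σ := hadp.adapted.isStoppingTime_hittingBtwn measurableSet_Ici
    have hσle : ∀ ω, σ ω ≤ n := fun ω => WithTop.coe_le_coe.mpr (hittingBtwn_le ω)
    have hnegsub : Submartingale (-K) ℱ μ := hsup.neg
    -- integrability of the stopped value
    have hsvint : Integrable (stoppedValue K σ) μ := by
      have h := hnegsub.integrable_stoppedValue hσ hσle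
      have heq : stoppedValue (-K) σ = -(stoppedValue K σ) := by
        funext ω; simp [stoppedValue]
      rw [heq] at h
      simpa using h.neg
    -- expectation bound
    have hexp : (∫ ω, stoppedValue K σ ω ∂μ) ≤ 1 := by
      have h := hnegsub.expected_stoppedValue_mono (isStoppingTime_const ℱ 0) hσ
        (fun ω => zero_le) hσle
      simp only [stoppedValue, Pi.neg_apply, integral_neg, neg_le_neg_iff] at h
      simp only [stoppedValue]
      calc (∫ ω, K (σ ω).untopA ω ∂μ) ≤ ∫ ω, K 0 ω ∂μ := by simpa using h
        _ = 1 := by simp [hK0]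
    -- lower bound on the stopped value on A n
    have hlow : ∀ ω ∈ A n, 1 / α ≤ stoppedValue K σ ω := by
      rintro ω ⟨t, ht, hle⟩
      have : stoppedValue K σ ω ∈ Set.Ici (1 / α) := by
        apply stoppedValue_hittingBtwn_mem
        exact ⟨t, ⟨Nat.zero_le _, ht⟩, hle⟩
      exact this
    -- combine
    have hchain : (1 / α) * (μ (A n)).toReal ≤ 1 := by
      calc (1 / α) * (μ (A n)).toReal
          ≤ ∫ ω in A n, stoppedValue K σ ω ∂μ :=
            setIntegral_ge_of_const_le_real (hAmeas n) (measure_ne_top μ _) hlow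
              hsvint.integrableOn
        _ ≤ ∫ ω, stoppedValue K σ ω ∂μ := by
            apply setIntegral_le_integral hsvint
            exact Filter.Eventually.of_forall fun ω => hKnn _ ω
        _ ≤ 1 := hexp
    have htoReal : (μ (A n)).toReal ≤ α := by
      have h2 := mul_le_mul_of_nonneg_left hchain hα0.le
      have h1 : α * ((1 / α) * (μ (A n)).toReal) = (μ (A n)).toReal := by
        field_simp
      linarith
    exact (ENNReal.le_ofReal_iff_toReal_le (measure_ne_top μ _) hα0.le).mpr htoReal
  -- conclude
  rw [hSU, (hAmono.directed_le).measure_iUnion]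
  exact iSup_le hbound
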